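/- Let G be a simple graph on a countably infinite vertex set satisfying the witness property: for all disjoint finite sets U, V of vertices there exists a vertex m ∉ U ∪ V adjacent to every vertex of U and to no vertex of V. Then for every partition of the vertex set of G into two sets M₁ ∪ M₂, at least one of the induced subgraphs G[M₁], G[M₂] satisfies the witness property, and hence is isomorphic to G. In particular, the random graph has the pigeonhole property and thus the point-Ramsey property. (Proposition 6.2.) -/

import Mathlib

universe u

namespace EDRP

/-- A graph `G` has the witness property: for all disjoint finite sets `U`, `V` of vertices
there is a vertex `m` outside `U ∪ V` adjacent to every vertex of `U` and to no vertex of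
`V`. -/
def WitnessProp {V : Type u} (G : SimpleGraph V) : Prop :=
  ∀ U W : Finset V, Disjoint U W → ∃ m : V, m ∉ U ∧ m ∉ W ∧
    (∀ u ∈ U, G.Adj m u) ∧ ∀ w ∈ W, ¬ G.Adj m w

section BackForth

variable {A B : Type u} (G : SimpleGraph A) (H : SimpleGraph B)

/-- A finite partial isomorphism between `G` and `H`, encoded as a list of pairs. -/
def Good (L : List (A × B)) : Prop :=
  (L.map Prod.fst).Nodup ∧ (L.map Prod.snd).Nodup ∧
    ∀ p ∈ L, ∀ q ∈ L, (G.Adj p.1 q.1 ↔ H.Adj p.2 q.2)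

lemma good_nil : Good G H [] := ⟨List.nodup_nil, List.nodup_nil, by simp⟩

lemma good_swap {L : List (A × B)} (h : Good G H L) : Good H G (L.map Prod.swap) := by
  obtain ⟨h1, h2, h3⟩ := h
  refine ⟨?_, ?_, ?_⟩
  · have : (L.map Prod.swap).map Prod.fst = L.map Prod.snd := by
      simp [List.map_map, Function.comp_def]
    rw [this]; exact h2
  · have : (L.map Prod.swap).map Prod.snd = L.map Prod.fst := by
      simp [List.map_map, Function.comp_def]
    rw [this]; exact h1
  · intro p hp q hq
    simp only [List.mem_map] at hp hq
    obtain ⟨p', hp', rfl⟩ := hp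
    obtain ⟨q', hq', rfl⟩ := hq
    exact (h3 p' hp' q' hq').symm

lemma extend_right (hH : WitnessProp H) {L : List (A × B)} (hL : Good G H L) (a : A) :
    ∃ L', Good G H L' ∧ L <+: L' ∧ a ∈ L'.map Prod.fst := by
  classical
  by_cases ha : a ∈ L.map Prod.fst
  · exact ⟨L, hL, List.prefix_refl _, ha⟩
  obtain ⟨h1, h2, h3⟩ := hL
  set U : Finset B := ((L.filter fun p => G.Adj a p.1).map Prod.snd).toFinset with hU
  set W : Finset B := ((L.filter fun p => ¬ G.Adj a p.1).map Prod.snd).toFinset with hW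
  have hmemU : ∀ b : B, b ∈ U ↔ ∃ p ∈ L, G.Adj a p.1 ∧ p.2 = b := by
    intro b
    simp [hU, List.mem_filter, and_assoc]
  have hmemW : ∀ b : B, b ∈ W ↔ ∃ p ∈ L, ¬ G.Adj a p.1 ∧ p.2 = b := by
    intro b
    simp [hW, List.mem_filter, and_assoc]
  have hdisj : Disjoint U W := by
    rw [Finset.disjoint_left]
    intro b hb hb'
    obtain ⟨p, hp, hpa, hpb⟩ := (hmemU b).1 hb
    obtain ⟨q, hq, hqa, hqb⟩ := (hmemW b).1 hb'
    have : p = q := List.inj_on_of_nodup_map h2 hp hq (hpb.trans hqb.symm)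
    exact hqa (this ▸ hpa)
  obtain ⟨m, hmU, hmW, hadj, hnadj⟩ := hH U W hdisj
  have hmss : m ∉ L.map Prod.snd := by
    intro hm
    rw [List.mem_map] at hm
    obtain ⟨p, hp, hpm⟩ := hm
    by_cases hpa : G.Adj a p.1
    · exact hmU ((hmemU m).2 ⟨p, hp, hpa, hpm⟩)
    · exact hmW ((hmemW m).2 ⟨p, hp, hpa, hpm⟩)
  have hadj' : ∀ p ∈ L, (G.Adj a p.1 ↔ H.Adj m p.2) := by
    intro p hp
    constructor
    · intro hga
      exact hadj p.2 ((hmemU p.2).2 ⟨p, hp, hga, rfl⟩)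
    · intro hhm
      by_contra hga
      exact hnadj p.2 ((hmemW p.2).2 ⟨p, hp, hga, rfl⟩) hhm
  refine ⟨L ++ [(a, m)], ⟨?_, ?_, ?_⟩, List.prefix_append _ _, by simp⟩
  · rw [List.map_append]
    simp only [List.map_cons, List.map_nil]
    rw [List.nodup_append]
    exact ⟨h1, List.nodup_singleton _, fun x hx y hy => by rw [List.mem_singleton.mp hy]; rintro rfl; exact ha hx⟩
  · rw [List.map_append]
    simp only [List.map_cons, List.map_nil]
    rw [List.nodup_append]
    exact ⟨h2, List.nodup_singleton _, fun x hx y hy => by rw [List.mem_singleton.mp hy]; rintro rfl; exact hmss hx⟩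
  · intro p hp q hq
    simp only [List.mem_append, List.mem_singleton] at hp hq
    rcases hp with hp | rfl
    · rcases hq with hq | rfl
      · exact h3 p hp q hq
      · simp only
        rw [G.adj_comm, H.adj_comm]
        exact hadj' p hp
    · rcases hq with hq | rfl
      · exact hadj' q hq
      · simp

lemma extend_left (hG' : WitnessProp G) {L : List (A × B)} (hL : Good G H L) (b : B) :
    ∃ L', Good G H L' ∧ L <+: L' ∧ b ∈ L'.map Prod.snd := by
  obtain ⟨L', hL', hpre, hb⟩ := extend_right H G hG' (good_swap G H hL) b
  have hswap : ∀ (M : List (B × A)), (M.map Prod.swap).map Prod.snd = M.map Prod.fst := by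
    intro M; simp [List.map_map, Function.comp_def]
  have hswap2 : (L.map Prod.swap).map Prod.swap = L := by
    simp [List.map_map, Function.comp_def]
  refine ⟨L'.map Prod.swap, ?_, ?_, ?_⟩
  · have := good_swap H G hL'
    rwa [show (L'.map Prod.swap : List (A × B)) = L'.map Prod.swap from rfl] at this
  · have := hpre.map Prod.swap
    rwa [hswap2] at this
  · rw [hswap]; exact hb

lemma extend_both (hG' : WitnessProp G) (hH : WitnessProp H) {L : List (A × B)}
    (hL : Good G H L) (a : A) (b : B) :
    ∃ L', Good G H L' ∧ L <+: L' ∧ a ∈ L'.map Prod.fst ∧ b ∈ L'.map Prod.snd := by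
  obtain ⟨L₁, hL₁, hpre₁, ha⟩ := extend_right G H hH hL a
  obtain ⟨L₂, hL₂, hpre₂, hb⟩ := extend_left G H hG' hL₁ b
  exact ⟨L₂, hL₂, hpre₁.trans hpre₂, (hpre₂.map Prod.fst).subset ha, hb⟩

variable (hG' : WitnessProp G) (hH : WitnessProp H) (e₁ : ℕ → A) (e₂ : ℕ → B)

/-- The back-and-forth chain of partial isomorphisms. -/
noncomputable def seq : ℕ → {L : List (A × B) // Good G H L}
  | 0 => ⟨[], good_nil G H⟩
  | n + 1 =>
    ⟨(extend_both G H hG' hH (seq n).2 (e₁ n) (e₂ n)).choose,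
      (extend_both G H hG' hH (seq n).2 (e₁ n) (e₂ n)).choose_spec.1⟩

lemma seq_spec (n : ℕ) :
    (seq G H hG' hH e₁ e₂ n).1 <+: (seq G H hG' hH e₁ e₂ (n + 1)).1 ∧
      e₁ n ∈ (seq G H hG' hH e₁ e₂ (n + 1)).1.map Prod.fst ∧
      e₂ n ∈ (seq G H hG' hH e₁ e₂ (n + 1)).1.map Prod.snd := by
  have h := (extend_both G H hG' hH (seq G H hG' hH e₁ e₂ n).2 (e₁ n) (e₂ n)).choose_spec
  exact ⟨h.2.1, h.2.2.1, h.2.2.2⟩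

lemma seq_mono {m n : ℕ} (h : m ≤ n) :
    (seq G H hG' hH e₁ e₂ m).1 <+: (seq G H hG' hH e₁ e₂ n).1 := by
  induction n, h using Nat.le_induction with
  | base => exact List.prefix_refl _
  | succ n _ ih => exact ih.trans (seq_spec G H hG' hH e₁ e₂ n).1

lemma uniq_fst {a : A} {b b' : B} {m n : ℕ}
    (h1 : (a, b) ∈ (seq G H hG' hH e₁ e₂ m).1) (h2 : (a, b') ∈ (seq G H hG' hH e₁ e₂ n).1) :
    b = b' := by
  have key : ∀ {c c' : B} {m n : ℕ}, m ≤ n → (a, c) ∈ (seq G H hG' hH e₁ e₂ m).1 →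
      (a, c') ∈ (seq G H hG' hH e₁ e₂ n).1 → c = c' := by
    intro c c' m n hmn h1 h2
    have h1' := (seq_mono G H hG' hH e₁ e₂ hmn).subset h1
    have := List.inj_on_of_nodup_map (seq G H hG' hH e₁ e₂ n).2.1 h1' h2
      (by rfl : Prod.fst (a, c) = Prod.fst (a, c'))
    exact congrArg Prod.snd this
  rcases le_total m n with h | h
  · exact key h h1 h2
  · exact (key h h2 h1).symm

lemma uniq_snd {a a' : A} {b : B} {m n : ℕ}
    (h1 : (a, b) ∈ (seq G H hG' hH e₁ e₂ m).1) (h2 : (a', b) ∈ (seq G H hG' hH e₁ e₂ n).1) :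
    a = a' := by
  have key : ∀ {c c' : A} {m n : ℕ}, m ≤ n → (c, b) ∈ (seq G H hG' hH e₁ e₂ m).1 →
      (c', b) ∈ (seq G H hG' hH e₁ e₂ n).1 → c = c' := by
    intro c c' m n hmn h1 h2
    have h1' := (seq_mono G H hG' hH e₁ e₂ hmn).subset h1
    have := List.inj_on_of_nodup_map (seq G H hG' hH e₁ e₂ n).2.2.1 h1' h2
      (by rfl : Prod.snd (c, b) = Prod.snd (c', b))
    exact congrArg Prod.fst this
  rcases le_total m n with h | h
  · exact key h h1 h2
  · exact (key h h2 h1).symm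

/-- Any two countably infinite graphs with the witness property are isomorphic. -/
lemma iso_of_witness {A B : Type u} [Countable A] [Infinite A] [Countable B] [Infinite B]
    (G : SimpleGraph A) (H : SimpleGraph B) (hG' : WitnessProp G) (hH : WitnessProp H) :
    Nonempty (G ≃g H) := by
  obtain ⟨e₁, he₁⟩ := exists_surjective_nat A
  obtain ⟨e₂, he₂⟩ := exists_surjective_nat B
  have htotal₁ : ∀ a : A, ∃ b n, (a, b) ∈ (seq G H hG' hH e₁ e₂ n).1 := by
    intro a
    obtain ⟨n, rfl⟩ := he₁ a
    have h := (seq_spec G H hG' hH e₁ e₂ n).2.1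
    rw [List.mem_map] at h
    obtain ⟨p, hp, hpa⟩ := h
    exact ⟨p.2, n + 1, by rw [← hpa]; simpa using hp⟩
  have htotal₂ : ∀ b : B, ∃ a n, (a, b) ∈ (seq G H hG' hH e₁ e₂ n).1 := by
    intro b
    obtain ⟨n, rfl⟩ := he₂ b
    have h := (seq_spec G H hG' hH e₁ e₂ n).2.2
    rw [List.mem_map] at h
    obtain ⟨p, hp, hpb⟩ := h
    exact ⟨p.1, n + 1, by rw [← hpb]; simpa using hp⟩
  choose f nf hf using htotal₁
  choose g ng hg using htotal₂
  have linv : Function.LeftInverse g f := fun a =>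
    uniq_snd G H hG' hH e₁ e₂ (hg (f a)) (hf a)
  have rinv : Function.RightInverse g f := fun b =>
    uniq_fst G H hG' hH e₁ e₂ (hf (g b)) (hg b)
  have hadj : ∀ a a' : A, G.Adj a a' ↔ H.Adj (f a) (f a') := by
    intro a a'
    have h1 := (seq_mono G H hG' hH e₁ e₂ (le_max_left (nf a) (nf a'))).subset (hf a)
    have h2 := (seq_mono G H hG' hH e₁ e₂ (le_max_right (nf a) (nf a'))).subset (hf a')
    exact (seq G H hG' hH e₁ e₂ (max (nf a) (nf a'))).2.2.2 _ h1 _ h2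
  exact ⟨⟨⟨f, g, linv, rinv⟩, fun {a a'} => (hadj a a').symm⟩⟩

end BackForth

lemma witness_infinite {A : Type u} (G : SimpleGraph A) (h : WitnessProp G) : Infinite A := by
  by_contra hinf
  rw [not_infinite_iff_finite] at hinf
  haveI := hinf
  haveI := Fintype.ofFinite A
  obtain ⟨m, _, hm, _, _⟩ := h ∅ Finset.univ (by simp)
  exact hm (Finset.mem_univ m)

/-- **Proposition 6.2.** If a countably infinite graph `G` has the witness property, then for
every partition `V = S ∪ Sᶜ` of its vertices, the induced subgraph on `S` or on `Sᶜ` has the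
witness property, and hence is isomorphic to `G`. (In particular, the random graph has the
pigeonhole property.) -/
theorem random_graph_pigeonhole {V : Type u} [Countable V] [Infinite V]
    (G : SimpleGraph V) (hG : WitnessProp G) (S : Set V) :
    (WitnessProp (G.induce S) ∧ Nonempty (G.induce S ≃g G)) ∨
      (WitnessProp (G.induce Sᶜ) ∧ Nonempty (G.induce Sᶜ ≃g G)) := by
  classical
  have key : ∀ (T : Set V), WitnessProp (G.induce T) →
      WitnessProp (G.induce T) ∧ Nonempty (G.induce T ≃g G) := by
    intro T hT
    haveI : Infinite ↥T := witness_infinite _ hT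
    exact ⟨hT, iso_of_witness _ _ hT hG⟩
  by_cases h1 : WitnessProp (G.induce S)
  · exact Or.inl (key S h1)
  by_cases h2 : WitnessProp (G.induce Sᶜ)
  · exact Or.inr (key Sᶜ h2)
  exfalso
  have neg : ∀ (T : Set V), ¬ WitnessProp (G.induce T) →
      ∃ U W : Finset ↥T, Disjoint U W ∧ ∀ m : ↥T, m ∉ U → m ∉ W →
        (∀ u ∈ U, (G.induce T).Adj m u) → ∃ w ∈ W, (G.induce T).Adj m w := by
    intro T h
    unfold WitnessProp at h
    push_neg at h
    exact h
  obtain ⟨U₁, W₁, hd₁, hno₁⟩ := neg S h1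
  obtain ⟨U₂, W₂, hd₂, hno₂⟩ := neg Sᶜ h2
  set UU : Finset V := U₁.image Subtype.val ∪ U₂.image Subtype.val with hUU
  set WW : Finset V := W₁.image Subtype.val ∪ W₂.image Subtype.val with hWW
  have hdisj : Disjoint UU WW := by
    rw [Finset.disjoint_left]
    intro a haU haW
    rw [hUU, Finset.mem_union] at haU
    rw [hWW, Finset.mem_union] at haW
    rcases haU with haU | haU <;> rcases haW with haW | haW <;>
      rw [Finset.mem_image] at haU haW <;>
      obtain ⟨u, hu, rfl⟩ := haU <;> obtain ⟨w, hw, hw'⟩ := haW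
    · have : w = u := Subtype.coe_injective hw'
      subst this
      exact Finset.disjoint_left.mp hd₁ hu hw
    · exact (hw' ▸ w.2) u.2
    · exact u.2 (hw' ▸ w.2)
    · have : w = u := Subtype.coe_injective hw'
      subst this
      exact Finset.disjoint_left.mp hd₂ hu hw
  obtain ⟨m, hmU, hmW, hadj, hnadj⟩ := hG UU WW hdisj
  rcases em (m ∈ S) with hmS | hmS
  · obtain ⟨w, hw, hwadj⟩ := hno₁ ⟨m, hmS⟩
      (fun hc => hmU (Finset.mem_union_left _ (Finset.mem_image_of_mem _ hc)))
      (fun hc => hmW (Finset.mem_union_left _ (Finset.mem_image_of_mem _ hc)))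
      (fun u hu => hadj ↑u (Finset.mem_union_left _ (Finset.mem_image_of_mem _ hu)))
    exact hnadj ↑w (Finset.mem_union_left _ (Finset.mem_image_of_mem _ hw)) hwadj
  · obtain ⟨w, hw, hwadj⟩ := hno₂ ⟨m, hmS⟩
      (fun hc => hmU (Finset.mem_union_right _ (Finset.mem_image_of_mem _ hc)))
      (fun hc => hmW (Finset.mem_union_right _ (Finset.mem_image_of_mem _ hc)))
      (fun u hu => hadj ↑u (Finset.mem_union_right _ (Finset.mem_image_of_mem _ hu)))
    exact hnadj ↑w (Finset.mem_union_right _ (Finset.mem_image_of_mem _ hw)) hwadj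

end EDRP
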